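/- Let D_a = D_aᵀ ∈ ℝ^{n×n}, Δ ∈ ℝ₊^{n×n}, and Ξ = {D : D_a − Δ ≤ D ≤ D_a + Δ}. Suppose μ ∈ ℝ₊ and a diagonal matrix Υ are such that the Metzler matrix Y = μE_{n×n} − Υ has the same eigenvalues as D_a, where E_{n×n} is the all-ones matrix. If μ > n‖Δ‖_max, then there exists an orthogonal matrix S ∈ ℝ^{n×n} such that SᵀDS is Metzler for every D ∈ Ξ. -/

import Mathlib

open Matrix Polynomial

/-- A square matrix is Metzler if all its off-diagonal entries are nonnegative. -/
def Metzler {n : ℕ} (A : Matrix (Fin n) (Fin n) ℝ) : Prop :=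
  ∀ i j, i ≠ j → 0 ≤ A i j

/-- Elementwise maximum norm. -/
noncomputable def maxNorm {n : ℕ} (A : Matrix (Fin n) (Fin n) ℝ) : ℝ :=
  ⨆ i, ⨆ j, |A i j|

lemma charpoly_conj' {n : ℕ} (P A Q : Matrix (Fin n) (Fin n) ℝ) (h : P * Q = 1) :
    (P * A * Q).charpoly = A.charpoly := by
  have hmap : (C : ℝ →+* ℝ[X]).mapMatrix P * (C : ℝ →+* ℝ[X]).mapMatrix Q = 1 := by
    rw [← _root_.map_mul, h, _root_.map_one]
  have key : charmatrix (P * A * Q) =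
      (C : ℝ →+* ℝ[X]).mapMatrix P * charmatrix A * (C : ℝ →+* ℝ[X]).mapMatrix Q := by
    unfold charmatrix
    rw [mul_sub, sub_mul, _root_.map_mul, _root_.map_mul]
    congr 1
    have hc : (Matrix.scalar (Fin n)) (X : ℝ[X]) = (X : ℝ[X]) • (1 : Matrix (Fin n) (Fin n) ℝ[X]) := by
      rw [Matrix.scalar_apply, smul_eq_diagonal_mul, Matrix.mul_one]
    rw [hc, mul_smul_comm, smul_mul_assoc, Matrix.mul_one, hmap]
  unfold Matrix.charpoly
  rw [key, det_mul, det_mul, mul_comm, ← mul_assoc, ← det_mul, Matrix.det_mul_comm, hmap, det_one, one_mul]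

lemma charpoly_diagonal' {n : ℕ} (d : Fin n → ℝ) :
    (Matrix.diagonal d).charpoly = ∏ i, (X - C (d i)) := by
  have key : charmatrix (Matrix.diagonal d) = Matrix.diagonal fun i => (X : ℝ[X]) - C (d i) := by
    ext i j
    by_cases hij : i = j
    · subst hij; simp [charmatrix_apply_eq]
    · simp [charmatrix_apply_ne _ _ _ hij, Matrix.diagonal_apply_ne _ hij]
  rw [Matrix.charpoly, key, det_diagonal]

lemma exists_perm_comp_eq {n : ℕ} {f g : Fin n → ℝ}
    (h : ((List.ofFn f : List ℝ) : Multiset ℝ) = ((List.ofFn g : List ℝ) : Multiset ℝ)) :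
    ∃ σ : Equiv.Perm (Fin n), f ∘ σ = g := by
  have hp : List.Perm (List.ofFn f) (List.ofFn g) := Multiset.coe_eq_coe.mp h
  have h1 : List.Perm (List.ofFn (f ∘ Tuple.sort f)) (List.ofFn (g ∘ Tuple.sort g)) :=
    (((Tuple.sort f).ofFn_comp_perm f).trans hp).trans ((Tuple.sort g).ofFn_comp_perm g).symm
  have heq : f ∘ Tuple.sort f = g ∘ Tuple.sort g :=
    List.ofFn_injective (List.Perm.eq_of_sortedLE
      (Tuple.monotone_sort f).sortedLE_ofFn (Tuple.monotone_sort g).sortedLE_ofFn h1)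
  refine ⟨(Tuple.sort g).symm.trans (Tuple.sort f), ?_⟩
  funext i
  have := congrFun heq ((Tuple.sort g).symm i)
  simpa using this

lemma real_spectral {n : ℕ} (A : Matrix (Fin n) (Fin n) ℝ) (h : Aᵀ = A) :
    ∃ (U : Matrix (Fin n) (Fin n) ℝ) (d : Fin n → ℝ), Uᵀ * U = 1 ∧ U * Uᵀ = 1 ∧
      A = U * Matrix.diagonal d * Uᵀ ∧ A.charpoly = ∏ i, (X - C (d i)) := by
  have hA : A.IsHermitian := by
    rw [Matrix.IsHermitian, conjTranspose_eq_transpose_of_trivial, h]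
  set U : Matrix (Fin n) (Fin n) ℝ := (hA.eigenvectorUnitary : Matrix (Fin n) (Fin n) ℝ)
  have hstar : star U = Uᵀ := by
    rw [Matrix.star_eq_conjTranspose, conjTranspose_eq_transpose_of_trivial]
  have h1 : Uᵀ * U = 1 := by
    rw [← hstar]; exact (mem_unitaryGroup_iff'.mp hA.eigenvectorUnitary.2)
  have h2 : U * Uᵀ = 1 := by
    rw [← hstar]; exact (mem_unitaryGroup_iff.mp hA.eigenvectorUnitary.2)
  have hspec : A = U * Matrix.diagonal hA.eigenvalues * Uᵀ := by
    have := hA.spectral_theorem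
    rw [Unitary.conjStarAlgAut_apply] at this
    change A = U * _ * star U at this
    rwa [hstar, RCLike.ofReal_real_eq_id, Function.id_comp] at this
  exact ⟨U, hA.eigenvalues, h1, h2, hspec,
    by rw [congrArg Matrix.charpoly hspec, charpoly_conj' U _ Uᵀ h2, charpoly_diagonal']⟩

lemma multiset_eq_of_prod_eq {n : ℕ} (d e : Fin n → ℝ)
    (h : (∏ i, (X - C (d i))) = ∏ i, (X - C (e i))) :
    (Finset.univ.val.map d : Multiset ℝ) = Finset.univ.val.map e := by
  have hd : (Multiset.map (fun i => X - C (d i)) Finset.univ.val)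
      = Multiset.map (fun a => X - C a) (Finset.univ.val.map d) := by
    rw [Multiset.map_map]; rfl
  have he : (Multiset.map (fun i => X - C (e i)) Finset.univ.val)
      = Multiset.map (fun a => X - C a) (Finset.univ.val.map e) := by
    rw [Multiset.map_map]; rfl
  have h2 := congrArg Polynomial.roots h
  rwa [Finset.prod_eq_multiset_prod, Finset.prod_eq_multiset_prod, hd, he,
    Polynomial.roots_multiset_prod_X_sub_C, Polynomial.roots_multiset_prod_X_sub_C] at h2

theorem stmt7 {n : ℕ} (Da Δ Υ : Matrix (Fin n) (Fin n) ℝ) (μ : ℝ)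
    (hDa : Daᵀ = Da) (hΔ : ∀ i j, 0 ≤ Δ i j) (hμ0 : 0 ≤ μ)
    (hΥ : ∃ d : Fin n → ℝ, Υ = Matrix.diagonal d)
    (hMetz : Metzler (μ • (Matrix.of fun _ _ => (1 : ℝ)) - Υ))
    (heig : (μ • (Matrix.of fun _ _ => (1 : ℝ)) - Υ).charpoly = Da.charpoly)
    (hμ : μ > n * maxNorm Δ) :
    ∃ S : Matrix (Fin n) (Fin n) ℝ, Sᵀ * S = 1 ∧
      ∀ D : Matrix (Fin n) (Fin n) ℝ,
        (∀ i j, Da i j - Δ i j ≤ D i j) → (∀ i j, D i j ≤ Da i j + Δ i j) →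
        Metzler (Sᵀ * D * S) := by
  classical
  obtain ⟨υ, rfl⟩ := hΥ
  set Y : Matrix (Fin n) (Fin n) ℝ := μ • (Matrix.of fun _ _ => (1 : ℝ)) - Matrix.diagonal υ
    with hYdef
  have hYsymm : Yᵀ = Y := by
    rw [hYdef, transpose_sub, transpose_smul, Matrix.diagonal_transpose]
    congr 1
  obtain ⟨U₁, d₁, hU₁1, hU₁2, hDa1, hDa2⟩ := real_spectral Da hDa
  obtain ⟨U₂, d₂, hU₂1, hU₂2, hY1, hY2⟩ := real_spectral Y hYsymm
  have hprod : (∏ i, (X - C (d₁ i))) = ∏ i, (X - C (d₂ i)) := by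
    rw [← hDa2, ← hY2]; exact heig.symm
  have hms := multiset_eq_of_prod_eq _ _ hprod
  have e1 : ∀ d : Fin n → ℝ, (Finset.univ.val.map d : Multiset ℝ)
      = ((List.ofFn d : List ℝ) : Multiset ℝ) := by
    intro d; simp [List.ofFn_eq_map, Fin.univ_def]
  obtain ⟨σ, hσ⟩ := exists_perm_comp_eq (f := d₁) (g := d₂) (by rw [← e1, ← e1]; exact hms)
  set V : Matrix (Fin n) (Fin n) ℝ := U₁.submatrix id ⇑σ with hVdef
  have hVt : Vᵀ = U₁ᵀ.submatrix ⇑σ id := by rw [hVdef, transpose_submatrix]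
  have hV1 : Vᵀ * V = 1 := by
    rw [hVt, hVdef]
    have h := submatrix_mul_equiv U₁ᵀ U₁ ⇑σ (Equiv.refl (Fin n)) ⇑σ
    simp only [Equiv.coe_refl] at h
    rw [show (id : Fin n → Fin n) = ⇑(Equiv.refl (Fin n)) from rfl]
    rw [submatrix_mul_equiv U₁ᵀ U₁ ⇑σ (Equiv.refl (Fin n)) ⇑σ, hU₁1, submatrix_one_equiv]
  have hdiag : (Matrix.diagonal d₁).submatrix ⇑σ ⇑σ = Matrix.diagonal d₂ := by
    rw [submatrix_diagonal_equiv, hσ]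
  have hDaV : V * Matrix.diagonal d₂ * Vᵀ = Da := by
    rw [← hdiag, hVdef, hVt]
    rw [submatrix_mul_equiv U₁ (Matrix.diagonal d₁) id σ ⇑σ,
      submatrix_mul_equiv (U₁ * Matrix.diagonal d₁) U₁ᵀ id σ id, submatrix_id_id, ← hDa1]
  have hVDaV : Vᵀ * Da * V = Matrix.diagonal d₂ := by
    rw [← hDaV]
    rw [show Vᵀ * (V * Matrix.diagonal d₂ * Vᵀ) * V
        = (Vᵀ * V) * Matrix.diagonal d₂ * (Vᵀ * V) by noncomm_ring, hV1, Matrix.one_mul,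
      Matrix.mul_one]
  set S : Matrix (Fin n) (Fin n) ℝ := V * U₂ᵀ with hSdef
  have hSt : Sᵀ = U₂ * Vᵀ := by rw [hSdef, transpose_mul, transpose_transpose]
  have hS : Sᵀ * S = 1 := by
    rw [hSt, hSdef, show U₂ * Vᵀ * (V * U₂ᵀ) = U₂ * (Vᵀ * V) * U₂ᵀ by noncomm_ring, hV1,
      Matrix.mul_one, hU₂2]
  have hSDa : Sᵀ * Da * S = Y := by
    rw [hSt, hSdef, show U₂ * Vᵀ * Da * (V * U₂ᵀ) = U₂ * (Vᵀ * Da * V) * U₂ᵀ by noncomm_ring,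
      hVDaV, ← hY1]
  refine ⟨S, hS, ?_⟩
  intro D hlo hhi i j hij
  -- basic bounds
  have hΔmax : ∀ k l, Δ k l ≤ maxNorm Δ := by
    intro k l
    have h1 : |Δ k l| ≤ ⨆ l', |Δ k l'| :=
      le_ciSup (f := fun l' => |Δ k l'|) (Set.Finite.bddAbove (Set.finite_range _)) l
    have h2 : (⨆ l', |Δ k l'|) ≤ maxNorm Δ :=
      le_ciSup (f := fun k' => ⨆ l', |Δ k' l'|) (Set.Finite.bddAbove (Set.finite_range _)) k
    calc Δ k l ≤ |Δ k l| := le_abs_self _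
      _ ≤ _ := h1.trans h2
  have hm0 : 0 ≤ maxNorm Δ := le_trans (hΔ i i) (hΔmax i i)
  have habs : ∀ k l, |(D - Da) k l| ≤ maxNorm Δ := by
    intro k l
    rw [Matrix.sub_apply, abs_le]
    constructor
    · have := hlo k l; have := hΔmax k l; linarith
    · have := hhi k l; have := hΔmax k l; linarith
  have hcol : ∀ i' : Fin n, ∑ k, (S k i') ^ 2 = 1 := by
    intro i'
    have := congrFun (congrFun hS i') i'
    rw [Matrix.mul_apply, Matrix.one_apply_eq] at this
    simpa [Matrix.transpose_apply, sq] using this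
  have hcolabs : ∀ i' : Fin n, ∑ k, |S k i'| ≤ Real.sqrt n := by
    intro i'
    have hsq : (∑ k, |S k i'|) ^ 2 ≤ (n : ℝ) * 1 := by
      calc (∑ k, |S k i'|) ^ 2 ≤ (Finset.univ.card : ℝ) * ∑ k, |S k i'| ^ 2 :=
            sq_sum_le_card_mul_sum_sq
        _ = (n : ℝ) * ∑ k, (S k i') ^ 2 := by simp [sq_abs]
        _ = (n : ℝ) * 1 := by rw [hcol i']
    have h0 : (0 : ℝ) ≤ ∑ k, |S k i'| := Finset.sum_nonneg fun k _ => abs_nonneg _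
    rw [show ((n : ℝ) * 1) = (n : ℝ) by ring] at hsq
    exact (Real.le_sqrt h0 (Nat.cast_nonneg n)).mpr hsq
  -- decomposition
  have hdecomp : Sᵀ * D * S = Y + Sᵀ * (D - Da) * S := by
    rw [← hSDa]; noncomm_ring
  have hYij : Y i j = μ := by
    rw [hYdef]
    simp [Matrix.sub_apply, Matrix.diagonal_apply_ne _ hij]
  have hEij : |(Sᵀ * (D - Da) * S) i j| ≤ n * maxNorm Δ := by
    have hentry : (Sᵀ * (D - Da) * S) i j = ∑ l, (∑ k, S k i * (D - Da) k l) * S l j := by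
      simp [Matrix.mul_apply, Matrix.transpose_apply]
    rw [hentry]
    calc |∑ l, (∑ k, S k i * (D - Da) k l) * S l j|
        ≤ ∑ l, |(∑ k, S k i * (D - Da) k l) * S l j| := Finset.abs_sum_le_sum_abs _ _
      _ ≤ ∑ l, ((∑ k, |S k i| * maxNorm Δ) * |S l j|) := by
          refine Finset.sum_le_sum fun l _ => ?_
          rw [abs_mul]
          refine mul_le_mul_of_nonneg_right ?_ (abs_nonneg _)
          calc |∑ k, S k i * (D - Da) k l| ≤ ∑ k, |S k i * (D - Da) k l| :=
                Finset.abs_sum_le_sum_abs _ _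
            _ ≤ ∑ k, |S k i| * maxNorm Δ := Finset.sum_le_sum fun k _ => by
                rw [abs_mul]
                exact mul_le_mul_of_nonneg_left (habs k l) (abs_nonneg _)
      _ = (∑ k, |S k i|) * maxNorm Δ * (∑ l, |S l j|) := by
          rw [← Finset.mul_sum, ← Finset.sum_mul]
      _ ≤ Real.sqrt n * maxNorm Δ * Real.sqrt n := by
          refine mul_le_mul (mul_le_mul_of_nonneg_right (hcolabs i) hm0) (hcolabs j)
            (Finset.sum_nonneg fun k _ => abs_nonneg _)
            (mul_nonneg (Real.sqrt_nonneg _) hm0)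
      _ = n * maxNorm Δ := by
          rw [show Real.sqrt n * maxNorm Δ * Real.sqrt n
              = Real.sqrt n * Real.sqrt n * maxNorm Δ by ring,
            Real.mul_self_sqrt (Nat.cast_nonneg n)]
  have := neg_abs_le ((Sᵀ * (D - Da) * S) i j)
  have hfin : (Sᵀ * D * S) i j = μ + (Sᵀ * (D - Da) * S) i j := by
    rw [hdecomp, Matrix.add_apply, hYij]
  rw [hfin]
  linarith [hEij, abs_le.mp hEij]
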